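/- arXiv:2406.03238 — 3 statements merged into one kernel-verified Lean document; each statement's English description precedes it below -/
import Mathlib

section
/- If V is a k-vector space equipped with a Frobenius map F_V, then the fixed-point set V^{F_V} is an 𝔽_q-linear subspace of V, and the natural k-linear map k ⊗_{𝔽_q} V^{F_V} → V given by λ ⊗ v ↦ λv is an isomorphism of k-vector spaces. -/
/-!
If `V` is a `k`-vector space (`k` an algebraic closure of `𝔽_q`) equipped with a
Frobenius map `F_V`, then the fixed-point set `V^{F_V}` is an `𝔽_q`-linear subspace
of `V` and the natural map `k ⊗_{𝔽_q} V^{F_V} → V`, `λ ⊗ v ↦ λ • v`, is an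
isomorphism of `k`-vector spaces.
-/

open scoped TensorProduct

namespace FrobeniusFixed

/-- A Frobenius map on a `k`-vector space `V` (relative to `q`): an additive
bijection `F : V → V` with `F (λ • v) = λ^q • F v` such that every vector is fixed
by some positive iterate of `F`. -/
structure FrobeniusMap (q : ℕ) (k : Type*) (V : Type*) [Field k]
    [AddCommGroup V] [Module k V] where
  toFun : V → V
  bijective : Function.Bijective toFun
  map_add : ∀ v w : V, toFun (v + w) = toFun v + toFun w
  map_smulq : ∀ (c : k) (v : V), toFun (c • v) = c ^ q • toFun v
  locally_finite : ∀ v : V, ∃ m : ℕ, 1 ≤ m ∧ toFun^[m] v = v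

open Polynomial in
lemma scalar_fixed {q : ℕ} (hq2 : 2 ≤ q)
    {F k : Type} [Field F] [Fintype F] (hF : Fintype.card F = q) [Field k] [Algebra F k]
    {x : k} (hx : x ^ q = x) : ∃ f : F, algebraMap F k f = x := by
  classical
  set P : Polynomial k := X ^ q - X with hP
  have hdeg : P.natDegree = q := by
    rw [hP, natDegree_sub_eq_left_of_natDegree_lt, natDegree_X_pow]
    rw [natDegree_X, natDegree_X_pow]; omega
  have hPne : P ≠ 0 := by
    intro h
    rw [h, natDegree_zero] at hdeg
    omega
  have hroot : ∀ y : k, y ^ q = y → y ∈ P.roots.toFinset := by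
    intro y hy
    rw [Multiset.mem_toFinset, mem_roots hPne]
    simp [hP, IsRoot, sub_eq_zero, hy]
  set img : Finset k := Finset.univ.image (algebraMap F k) with himg
  have hsub : img ⊆ P.roots.toFinset := by
    intro y hy
    rw [himg, Finset.mem_image] at hy
    obtain ⟨f, -, rfl⟩ := hy
    apply hroot
    rw [← map_pow, ← hF, FiniteField.pow_card]
  have hcard : img.card = q := by
    rw [himg, Finset.card_image_of_injective _ (algebraMap F k).injective,
      Finset.card_univ, hF]
  have hle : P.roots.toFinset.card ≤ q := by
    calc P.roots.toFinset.card ≤ Multiset.card P.roots := P.roots.toFinset_card_le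
    _ ≤ P.natDegree := P.card_roots' 
    _ = q := hdeg
  have heq : img = P.roots.toFinset :=
    Finset.eq_of_subset_of_card_le hsub (by omega)
  have : x ∈ img := heq ▸ hroot x hx
  rw [himg, Finset.mem_image] at this
  obtain ⟨f, -, hf⟩ := this
  exact ⟨f, hf⟩

lemma indep {q : ℕ} (hq2 : 2 ≤ q)
    {F k : Type} [Field F] [Fintype F] (hF : Fintype.card F = q) [Field k] [Algebra F k]
    {V : Type} [AddCommGroup V] [Module k V] [Module F V] [IsScalarTower F k V]
    (Fr : FrobeniusMap q k V) {ι : Type*} {v : ι → V} (hfix : ∀ i, Fr.toFun (v i) = v i)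
    (hli : LinearIndependent F v) : LinearIndependent k v := by
  classical
  set Φ : V →+ V := AddMonoidHom.mk' Fr.toFun Fr.map_add with hΦ
  have hΦv : ∀ (c : k) (w : V), Φ (c • w) = c ^ q • Φ w := Fr.map_smulq
  rw [linearIndependent_iff']
  intro s
  induction s using Finset.strongInductionOn with
  | _ s ih =>
    intro g hg
    by_contra hcon
    push_neg at hcon
    obtain ⟨j, hjs, hgj⟩ := hcon
    set h : ι → k := fun i => g i * (g j)⁻¹ with hh
    have hhj : h j = 1 := by simp only [hh]; exact mul_inv_cancel₀ hgj
    have hsum : ∑ i ∈ s, h i • v i = 0 := by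
      have : ∑ i ∈ s, h i • v i = (g j)⁻¹ • ∑ i ∈ s, g i • v i := by
        rw [Finset.smul_sum]
        exact Finset.sum_congr rfl fun i _ => by rw [smul_smul, hh, mul_comm]
      rw [this, hg, smul_zero]
    have hsumq : ∑ i ∈ s, (h i) ^ q • v i = 0 := by
      have h2 := congrArg Φ hsum
      rw [map_sum, map_zero] at h2
      rw [← h2]
      refine Finset.sum_congr rfl fun i _ => ?_
      rw [hΦv]
      simp only [hΦ, AddMonoidHom.mk'_apply, hfix]
    have hsub : ∑ i ∈ s, ((h i) ^ q - h i) • v i = 0 := by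
      have h2 : ∑ i ∈ s, ((h i)^q - h i) • v i
          = (∑ i ∈ s, (h i)^q • v i) - ∑ i ∈ s, h i • v i := by
        rw [← Finset.sum_sub_distrib]
        exact Finset.sum_congr rfl fun i _ => sub_smul _ _ _
      rw [h2, hsumq, hsum, sub_zero]
    have herase : ∑ i ∈ s.erase j, ((h i) ^ q - h i) • v i = 0 := by
      have hji : ((h j)^q - h j) • v j = 0 := by rw [hhj, one_pow, sub_self, zero_smul]
      rwa [← Finset.add_sum_erase s _ hjs, hji, zero_add] at hsub
    have hfixUp : ∀ i ∈ s, (h i) ^ q = h i := by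
      intro i hi
      by_cases hij : i = j
      · rw [hij, hhj, one_pow]
      · have := ih (s.erase j) (Finset.erase_ssubset hjs) _ herase i
          (Finset.mem_erase.mpr ⟨hij, hi⟩)
        exact sub_eq_zero.mp this
    have hex : ∀ i ∈ s, ∃ f : F, algebraMap F k f = h i :=
      fun i hi => scalar_fixed hq2 hF (hfixUp i hi)
    set f : ι → F := fun i => if hi : i ∈ s then (hex i hi).choose else 0 with hf
    have hfi : ∀ i ∈ s, algebraMap F k (f i) = h i := by
      intro i hi
      simp only [hf, dif_pos hi]
      exact (hex i hi).choose_spec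
    have hFsum : ∑ i ∈ s, f i • v i = 0 := by
      have h2 : ∀ i ∈ s, f i • v i = h i • v i := fun i hi => by
        rw [← hfi i hi, algebraMap_smul]
      rw [Finset.sum_congr rfl h2, hsum]
    have hz := linearIndependent_iff'.mp hli s f hFsum j hjs
    have hj0 := hfi j hjs
    rw [hz, map_zero, hhj] at hj0
    exact one_ne_zero hj0.symm

lemma span_fixed {q : ℕ} (hq2 : 2 ≤ q)
    {k : Type} [Field k] [IsAlgClosed k] (hq0 : (q : k) = 0)
    {V : Type} [AddCommGroup V] [Module k V]
    (Fr : FrobeniusMap q k V) (v : V) :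
    v ∈ Submodule.span k {w : V | Fr.toFun w = w} := by
  classical
  obtain ⟨m, hm1, hmv⟩ := Fr.locally_finite v
  set Φ : V →+ V := AddMonoidHom.mk' Fr.toFun Fr.map_add with hΦ
  have hΦv : ∀ (c : k) (w : V), Φ (c • w) = c ^ q • Φ w := Fr.map_smulq
  set u : ℕ → V := fun i => Fr.toFun^[i] v with hu
  have hu0 : u 0 = v := rfl
  have hum : u m = v := hmv
  have hΦu : ∀ i, Φ (u i) = u (i + 1) := fun i =>
    (Function.iterate_succ_apply' Fr.toFun i v).symm
  set N := q ^ m - 1 with hN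
  have hqm1 : 1 ≤ q ^ m := Nat.one_le_pow _ _ (by omega)
  have hNk : ((N : ℕ) : k) = -1 := by
    rw [hN, Nat.cast_sub hqm1, Nat.cast_pow, hq0, zero_pow (by omega), zero_sub, Nat.cast_one]
  have : NeZero ((N : ℕ) : k) := ⟨by rw [hNk]; exact neg_ne_zero.mpr one_ne_zero⟩
  obtain ⟨ζ, hζ⟩ := HasEnoughRootsOfUnity.exists_primitiveRoot k N
  have hζN : ζ ^ (q ^ m) = ζ := by
    have h1 : ζ ^ N = 1 := hζ.pow_eq_one
    calc ζ ^ (q ^ m) = ζ ^ (N + 1) := by congr 1; omega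
    _ = ζ ^ N * ζ := by rw [pow_succ]
    _ = ζ := by rw [h1, one_mul]
  set t : k → V := fun c => ∑ i : Fin m, c ^ q ^ (i : ℕ) • u i with ht
  have hfixed : ∀ c : k, c ^ (q ^ m) = c → Fr.toFun (t c) = t c := by
    intro c hc
    show Φ (t c) = t c
    rw [ht]
    simp only []
    rw [Fin.sum_univ_eq_sum_range (fun i => c ^ q ^ i • u i) m]
    rw [map_sum]
    have h1 : ∀ i ∈ Finset.range m, Φ (c ^ q ^ i • u i) = c ^ q ^ (i + 1) • u (i + 1) := by
      intro i _
      rw [hΦv, hΦu, ← pow_mul, ← pow_succ]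
    rw [Finset.sum_congr rfl h1]
    have h2 : ∑ i ∈ Finset.range m, c ^ q ^ (i + 1) • u (i + 1)
        = (∑ i ∈ Finset.range m, c ^ q ^ i • u i) + c ^ q ^ m • u m - c ^ q ^ 0 • u 0 := by
      rw [eq_sub_iff_add_eq, ← Finset.sum_range_succ (fun i => c ^ q ^ i • u i) m]
      exact (Finset.sum_range_succ' (fun i => c ^ q ^ i • u i) m).symm
    rw [h2, hum, hu0, pow_zero, pow_one, hc, add_sub_cancel_right]
  set x : Fin m → k := fun i => ζ ^ q ^ (i : ℕ) with hx
  have hxinj : Function.Injective x := by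
    rcases Nat.lt_or_ge m 2 with hm2 | hm2
    · intro a b _
      have ha := a.isLt; have hb := b.isLt
      exact Fin.ext (by omega)
    · intro a b hab
      have hlt : ∀ i : Fin m, q ^ (i : ℕ) < N := by
        intro i
        have h1 : q ^ (i : ℕ) ≤ q ^ (m - 1) :=
          Nat.pow_le_pow_right (by omega) (by omega)
        have h2 : q ^ (m - 1) * 2 ≤ q ^ (m - 1) * q := Nat.mul_le_mul_left _ (by omega)
        have h3 : q ^ (m - 1) * q = q ^ m := by rw [← pow_succ]; congr 1; omega
        have h4 : 2 ≤ q ^ (m - 1) := le_trans hq2 (Nat.le_self_pow (by omega) q)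
        omega
      have := hζ.pow_inj (hlt a) (hlt b) hab
      exact Fin.ext (Nat.pow_right_injective hq2 this)
  set M : Matrix (Fin m) (Fin m) k := (Matrix.vandermonde x).transpose with hM
  have hdet : IsUnit M.det := by
    rw [hM, Matrix.det_transpose, Matrix.det_vandermonde, isUnit_iff_ne_zero,
      Finset.prod_ne_zero_iff]
    intro i _
    rw [Finset.prod_ne_zero_iff]
    intro j hj
    refine sub_ne_zero.mpr fun h => ?_
    exact absurd (hxinj h) (Finset.mem_Ioi.mp hj).ne'
  set B := M⁻¹ with hB
  have hBM : B * M = 1 := Matrix.nonsing_inv_mul M hdet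
  set z : Fin m := ⟨0, by omega⟩ with hz
  have hMji : ∀ (j i : Fin m), (ζ ^ (j : ℕ)) ^ q ^ (i : ℕ) = M j i := by
    intro j i
    rw [← pow_mul, mul_comm, pow_mul]
    rfl
  have key : v = ∑ j : Fin m, B z j • t (ζ ^ (j : ℕ)) := by
    have h1 : ∀ j : Fin m, t (ζ ^ (j : ℕ)) = ∑ i : Fin m, M j i • u i := by
      intro j
      rw [ht]
      exact Finset.sum_congr rfl fun i _ => by rw [hMji]
    calc v = ∑ i : Fin m, (1 : Matrix (Fin m) (Fin m) k) z i • u i := by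
          simp [Matrix.one_apply, hu0]
          rfl
    _ = ∑ i : Fin m, (B * M) z i • u i := by rw [hBM]
    _ = ∑ i : Fin m, ∑ j : Fin m, (B z j * M j i) • u i := by
          refine Finset.sum_congr rfl fun i _ => ?_
          rw [Matrix.mul_apply, Finset.sum_smul]
    _ = ∑ j : Fin m, ∑ i : Fin m, (B z j * M j i) • u i := Finset.sum_comm
    _ = ∑ j : Fin m, B z j • t (ζ ^ (j : ℕ)) := by
          refine Finset.sum_congr rfl fun j _ => ?_
          rw [h1, Finset.smul_sum]
          exact Finset.sum_congr rfl fun i _ => (smul_smul _ _ _).symm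
  rw [key]
  refine Submodule.sum_mem _ fun j _ => Submodule.smul_mem _ _ (Submodule.subset_span ?_)
  show Fr.toFun (t (ζ ^ (j : ℕ))) = t (ζ ^ (j : ℕ))
  refine hfixed _ ?_
  rw [← pow_mul, mul_comm, pow_mul, hζN]

/-- The fixed points of a Frobenius map form an `𝔽_q`-subspace `W` of `V`, and
`k ⊗_{𝔽_q} W ≃ V` via `λ ⊗ v ↦ λ • v`. -/
theorem fixedPoints_submodule_and_baseChange
    (p n q : ℕ) (hp : p.Prime) (hn : 0 < n) (hq : q = p ^ n)
    (F : Type) [Field F] [Fintype F] (hF : Fintype.card F = q)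
    (k : Type) [Field k] [Algebra F k] [IsAlgClosure F k]
    (V : Type) [AddCommGroup V] [Module k V] [Module F V] [IsScalarTower F k V]
    (Fr : FrobeniusMap q k V) :
    ∃ W : Submodule F V, (∀ v : V, v ∈ W ↔ Fr.toFun v = v) ∧
      ∃ e : (k ⊗[F] W) ≃ₗ[k] V, ∀ (c : k) (w : W), e (c ⊗ₜ[F] w) = c • (w : V) := by
  classical
  haveI : IsAlgClosed k := IsAlgClosure.isAlgClosed F
  have hq2 : 2 ≤ q := by
    rw [hq]
    calc 2 = 2 ^ 1 := rfl
    _ ≤ p ^ n := Nat.pow_le_pow_left hp.two_le n |>.trans' (by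
        exact Nat.pow_le_pow_right (by omega) hn)
  have hqF : ((q : ℕ) : F) = 0 := by rw [← hF]; exact FiniteField.cast_card_eq_zero F
  have hq0 : ((q : ℕ) : k) = 0 := by
    rw [← map_natCast (algebraMap F k) q, hqF, map_zero]
  have hpow : ∀ c : F, c ^ q = c := by
    intro c; rw [← hF]; exact FiniteField.pow_card c
  have hFr0 : Fr.toFun 0 = 0 := by
    have := Fr.map_add 0 0
    rw [add_zero] at this
    exact left_eq_add.mp this
  -- the submodule of fixed points
  set W : Submodule F V :=
    { carrier := {v : V | Fr.toFun v = v}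
      add_mem' := fun {a b} ha hb => by
        show Fr.toFun (a + b) = a + b
        rw [Fr.map_add, ha, hb]
      zero_mem' := hFr0
      smul_mem' := fun c x hx => by
        show Fr.toFun (c • x) = c • x
        rw [← algebraMap_smul k c x, Fr.map_smulq, ← map_pow, hpow, hx] } with hWdef
  refine ⟨W, fun v => Iff.rfl, ?_⟩
  set e₀ : k ⊗[F] W →ₗ[k] V := (W.subtype).liftBaseChange k with he₀def
  have he₀ : ∀ (c : k) (w : W), e₀ (c ⊗ₜ[F] w) = c • (w : V) := fun c w =>
    LinearMap.liftBaseChange_tmul _ _ _ _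
  have hsurj : Function.Surjective e₀ := by
    rw [← LinearMap.range_eq_top, eq_top_iff]
    intro v _
    have hv := span_fixed hq2 hq0 Fr v
    refine Submodule.span_le.mpr ?_ hv
    intro w hw
    exact ⟨(1 : k) ⊗ₜ[F] (⟨w, hw⟩ : W), by rw [he₀, one_smul]⟩
  have hinj : Function.Injective e₀ := by
    set Bb := Module.Basis.ofVectorSpace F W with hBb
    have hfix' : ∀ i, Fr.toFun ((Bb i : W) : V) = ((Bb i : W) : V) := fun i => (Bb i).2
    have hliF : LinearIndependent F (fun i => ((Bb i : W) : V)) :=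
      Bb.linearIndependent.map' W.subtype W.ker_subtype
    have hlik : LinearIndependent k (fun i => ((Bb i : W) : V)) :=
      indep hq2 hF Fr hfix' hliF
    set Bk := Bb.baseChange k with hBk
    have hcomp : ∀ i, e₀ (Bk i) = ((Bb i : W) : V) := by
      intro i
      rw [hBk, Module.Basis.baseChange_apply, he₀, one_smul]
    rw [← LinearMap.ker_eq_bot, eq_bot_iff]
    intro y hy
    have hy0 : e₀ y = 0 := hy
    have hrep : Finsupp.linearCombination k (fun i => ((Bb i : W) : V)) (Bk.repr y) = 0 := by
      have h1 : Finsupp.linearCombination k (⇑e₀ ∘ fun i => Bk i) (Bk.repr y)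
          = e₀ (Finsupp.linearCombination k (fun i => Bk i) (Bk.repr y)) :=
        (Finsupp.apply_linearCombination k e₀ _ _).symm
      rw [Bk.linearCombination_repr, hy0] at h1
      have hfun : (⇑e₀ ∘ fun i => Bk i) = fun i => ((Bb i : W) : V) := funext hcomp
      rw [hfun] at h1
      exact h1
    have := linearIndependent_iff.mp hlik _ hrep
    have : y = 0 := by
      have h2 := congrArg Bk.repr.symm this
      rwa [Bk.repr.symm_apply_apply, map_zero] at h2
    simp [this]
  exact ⟨LinearEquiv.ofBijective e₀ ⟨hinj, hsurj⟩, he₀⟩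

end FrobeniusFixed
end

section
/- If A is a k-algebra equipped with a Frobenius morphism F_A, then the fixed-point set A^{F_A} is an 𝔽_q-subalgebra of A, and the natural map k ⊗_{𝔽_q} A^{F_A} → A given by λ ⊗ a ↦ λa is an isomorphism of k-algebras. -/
/-!
If `A` is a `k`-algebra (`k` an algebraic closure of `𝔽_q`) equipped with a
Frobenius morphism `F_A`, then the fixed-point set `A^{F_A}` is an `𝔽_q`-subalgebra
of `A` and the natural map `k ⊗_{𝔽_q} A^{F_A} → A`, `λ ⊗ a ↦ λ • a`, is an
isomorphism of `k`-algebras.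
-/

open scoped TensorProduct

namespace FrobeniusFixedAlg

open Polynomial

/-- A Frobenius map on a `k`-vector space `V` (relative to `q`). -/
structure FrobeniusMap (q : ℕ) (k : Type*) (V : Type*) [Field k]
    [AddCommGroup V] [Module k V] where
  toFun : V → V
  bijective : Function.Bijective toFun
  map_add : ∀ v w : V, toFun (v + w) = toFun v + toFun w
  map_smulq : ∀ (c : k) (v : V), toFun (c • v) = c ^ q • toFun v
  locally_finite : ∀ v : V, ∃ m : ℕ, 1 ≤ m ∧ toFun^[m] v = v

/-- A Frobenius morphism on a `k`-algebra `A`: a Frobenius map on the underlying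
vector space preserving the unit and the multiplication. -/
structure FrobeniusAlgMor (q : ℕ) (k : Type*) (A : Type*) [Field k] [Ring A]
    [Algebra k A] extends FrobeniusMap q k A where
  map_one : toFun 1 = 1
  map_mul : ∀ a b : A, toFun (a * b) = toFun a * toFun b

lemma pow_q_fixed (p n q : ℕ) (hp : p.Prime) (hn : 0 < n) (hq : q = p ^ n)
    (F : Type) [Field F] [Fintype F] (hF : Fintype.card F = q)
    (k : Type) [Field k] [Algebra F k]
    (x : k) (hx : x ^ q = x) : ∃ c : F, algebraMap F k c = x := by
  classical
  have hq2 : 2 ≤ q := by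
    rw [hq]; calc 2 ≤ p := hp.two_le
    _ ≤ p ^ n := Nat.le_self_pow (by omega) p
  set P : k[X] := X ^ q - X with hP
  have hdeg : P.natDegree = q := FiniteField.X_pow_card_sub_X_natDegree_eq k (by omega)
  have hP0 : P ≠ 0 := by intro h; rw [h] at hdeg; simp at hdeg; omega
  have hroot : ∀ y : k, y ^ q = y → y ∈ P.roots.toFinset := by
    intro y hy
    rw [Multiset.mem_toFinset, mem_roots hP0]
    simp [hP, Polynomial.IsRoot, hy]
  set img : Finset k := Finset.univ.image (algebraMap F k) with himg
  have hinj : Function.Injective (algebraMap F k) := (algebraMap F k).injective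
  have hcard : img.card = q := by
    rw [himg, Finset.card_image_of_injective _ hinj, Finset.card_univ, hF]
  have hsub : img ⊆ P.roots.toFinset := by
    intro y hy
    rw [himg, Finset.mem_image] at hy
    obtain ⟨c, -, rfl⟩ := hy
    apply hroot
    rw [← map_pow, ← hF, FiniteField.pow_card]
  have hle : P.roots.toFinset.card ≤ img.card := by
    rw [hcard]
    calc P.roots.toFinset.card ≤ Multiset.card P.roots := Multiset.toFinset_card_le _
    _ ≤ P.natDegree := Polynomial.card_roots' P
    _ = q := hdeg
  have heq : img = P.roots.toFinset := Finset.eq_of_subset_of_card_le hsub hle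
  have hxmem : x ∈ img := by rw [heq]; exact hroot x hx
  rw [himg, Finset.mem_image] at hxmem
  obtain ⟨c, -, hc⟩ := hxmem
  exact ⟨c, hc⟩


lemma charP_of_card (p n q : ℕ) (hp : p.Prime) (hn : 0 < n) (hq : q = p ^ n)
    (F : Type) [Field F] [Fintype F] (hF : Fintype.card F = q) : CharP F p := by
  obtain ⟨n', hr, hcard⟩ := FiniteField.card F (ringChar F)
  have : ringChar F = p := by
    have hdvd : ringChar F ∣ p ^ n := by
      rw [← hq, ← hF, hcard]; exact dvd_pow_self _ (by positivity)
    exact (Nat.prime_dvd_prime_iff_eq hr hp).mp (hr.dvd_of_dvd_pow hdvd)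
  rw [← this]; exact ringChar.charP F

set_option synthInstance.maxHeartbeats 1000000 in
set_option maxHeartbeats 1000000 in
lemma exists_moore (p n q : ℕ) (hp : p.Prime) (hn : 0 < n) (hq : q = p ^ n)
    (F : Type) [Field F] [Fintype F] (hF : Fintype.card F = q)
    (k : Type) [Field k] [Algebra F k] [IsAlgClosure F k]
    (m : ℕ) (hm : 1 ≤ m) :
    ∃ lam b : Fin m → k, (∀ j, b j ^ q ^ m = b j) ∧
      ∀ i : Fin m, (∑ j, lam j * b j ^ q ^ (i : ℕ)) = if (i : ℕ) = 0 then 1 else 0 := by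
  classical
  haveI : Fact p.Prime := ⟨hp⟩
  haveI hFp : CharP F p := charP_of_card p n q hp hn hq F hF
  haveI hkp : CharP k p := charP_of_injective_algebraMap (algebraMap F k).injective p
  haveI : ExpChar k p := ExpChar.prime hp
  have hq2 : 2 ≤ q := by
    rw [hq]; calc 2 ≤ p := hp.two_le
    _ ≤ p ^ n := Nat.le_self_pow hn.ne' p
  have hqm : q ^ m = p ^ (n * m) := by rw [hq, pow_mul]
  have hqm1 : 1 < q ^ m := by
    calc 1 < 2 := one_lt_two
    _ ≤ q := hq2
    _ ≤ q ^ m := Nat.le_self_pow (by omega) q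
  -- frobenius-type facts
  have hpowq : ∀ (e : ℕ) (x y : k), (x + y) ^ q ^ e = x ^ q ^ e + y ^ q ^ e := by
    intro e x y
    have h1 : q ^ e = p ^ (n * e) := by rw [hq, pow_mul]
    rw [h1]
    exact add_pow_expChar_pow x y p (n * e)
  have hFfix : ∀ (c : F) (e : ℕ), c ^ q ^ e = c := by
    intro c e
    induction e with
    | zero => simp
    | succ e ih => rw [pow_succ, pow_mul, ih, ← hF, FiniteField.pow_card]
  -- the subfield of elements fixed by x ↦ x ^ q ^ m
  let K : Subfield k :=
    { carrier := {x : k | x ^ q ^ m = x}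
      mul_mem' := by intro a b ha hb; simp only [Set.mem_setOf_eq] at *; rw [mul_pow, ha, hb]
      one_mem' := by simp
      add_mem' := by
        intro a b ha hb; simp only [Set.mem_setOf_eq] at *; rw [hpowq, ha, hb]
      zero_mem' := by simp only [Set.mem_setOf_eq]; exact zero_pow (by positivity)
      neg_mem' := by
        intro a ha; simp only [Set.mem_setOf_eq] at *
        have : (-a) ^ q ^ m = (-1 : k) ^ q ^ m * a ^ q ^ m := by rw [← mul_pow]; ring_nf
        have hneg1 : ((-1 : k)) ^ q ^ m = -1 := by
          have := hpowq m 1 (-1)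
          simp only [add_neg_cancel, one_pow] at this
          have h0 : (0:k) ^ q ^ m = 0 := zero_pow (by omega)
          rw [h0] at this
          linear_combination -this
        rw [this, hneg1, ha]; ring
      inv_mem' := by
        intro a ha; simp only [Set.mem_setOf_eq] at *
        rw [inv_pow, ha] }
  have hKmem : ∀ x : k, x ∈ K ↔ x ^ q ^ m = x := fun _ => Iff.rfl
  -- K is finite of cardinality q ^ m
  set g : F[X] := X ^ q ^ m - X with hg
  have hgsep : g.Separable := galois_poly_separable p (q ^ m) (by rw [hqm]; exact dvd_pow_self _ (by positivity))
  haveI : IsAlgClosed k := IsAlgClosure.isAlgClosed F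
  have hgsplits : Splits (g.map (algebraMap F k)) := IsAlgClosed.splits _
  have hgdeg : g.natDegree = q ^ m := FiniteField.X_pow_card_sub_X_natDegree_eq F hqm1
  have hg0 : g ≠ 0 := by intro h; rw [h] at hgdeg; simp at hgdeg; omega
  have hrootSet : g.rootSet k = (K : Set k) := by
    ext x
    rw [mem_rootSet' ]
    simp only [hg, SetLike.mem_coe, hKmem]
    constructor
    · rintro ⟨-, h2⟩
      rw [map_sub, map_pow, aeval_X] at h2
      exact sub_eq_zero.mp h2
    · intro h
      constructor
      · exact (Polynomial.map_ne_zero_iff (algebraMap F k).injective).mpr hg0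
      · rw [map_sub, map_pow, aeval_X, h, sub_self]
  haveI fintypeK : Fintype K := Fintype.ofEquiv _ (Equiv.setCongr hrootSet)
  have hcardK : Fintype.card K = q ^ m := by
    rw [← hgdeg, ← Polynomial.card_rootSet_eq_natDegree hgsep hgsplits]
    exact (Fintype.card_congr (Equiv.setCongr hrootSet)).symm
  -- F-algebra structure on K
  let rho : F →+* K :=
    { toFun := fun c => ⟨algebraMap F k c, by
        rw [hKmem, ← map_pow, hFfix c m]⟩
      map_one' := by ext; simp
      map_mul' := by intro a b; ext; simp
      map_zero' := by ext; simp
      map_add' := by intro a b; ext; simp }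
  letI : Algebra F K := rho.toAlgebra
  haveI : Module.Finite F K := Module.Finite.of_finite
  have hfr : Module.finrank F K = m := by
    have hcard := Module.card_eq_pow_finrank (K := F) (V := K)
    rw [hcardK, hF] at hcard
    exact (Nat.pow_right_injective hq2 hcard).symm
  let bK : Module.Basis (Fin m) F K := (Module.finBasis F K).reindex (finCongr hfr)
  let b : Fin m → k := fun j => ((bK j : K) : k)
  have hbfix : ∀ j, b j ^ q ^ m = b j := fun j => (bK j).2
  -- power maps as ring homs
  have hiter : ∀ (i : ℕ) (z : k), z ^ q ^ i = iterateFrobenius k p (n * i) z := by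
    intro i z; rw [iterateFrobenius_def, hq, pow_mul]
  have hcoe_sum : ∀ x : K, ((x : K) : k) = ∑ j, algebraMap F k (bK.repr x j) * b j := by
    intro x
    calc ((x : K) : k) = K.subtype x := rfl
    _ = K.subtype (∑ j, bK.repr x j • bK j) := by rw [bK.sum_repr x]
    _ = ∑ j, K.subtype (bK.repr x j • bK j) := map_sum K.subtype _ Finset.univ
    _ = ∑ j, algebraMap F k (bK.repr x j) * b j := by
        refine Finset.sum_congr rfl fun j _ => ?_
        rw [Algebra.smul_def, map_mul]
        rfl
  have halgfix : ∀ (c : F) (i : ℕ), algebraMap F k c ^ q ^ i = algebraMap F k c := by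
    intro c i; rw [← map_pow, hFfix c i]
  have hexp : ∀ (x : K) (i : ℕ),
      ((x : K) : k) ^ q ^ i = ∑ j, algebraMap F k (bK.repr x j) * b j ^ q ^ i := by
    intro x i
    rw [hiter i, hcoe_sum x, map_sum]
    refine Finset.sum_congr rfl fun j _ => ?_
    rw [map_mul, ← hiter i, ← hiter i, halgfix]
  -- the Moore matrix
  let N : Matrix (Fin m) (Fin m) k := Matrix.of fun i j => b j ^ q ^ (i : ℕ)
  have hdet : N.det ≠ 0 := by
    intro hdet0
    have hdetT : N.transpose.det = 0 := by rw [Matrix.det_transpose]; exact hdet0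
    obtain ⟨v, hv0, hv⟩ := (Matrix.exists_mulVec_eq_zero_iff).mpr hdetT
    have hrow : ∀ j, ∑ i, v i * b j ^ q ^ (i : ℕ) = 0 := by
      intro j
      have h := congrFun hv j
      simp only [Matrix.mulVec, dotProduct, Matrix.transpose_apply, Matrix.of_apply,
        Pi.zero_apply, N] at h
      rw [← h]
      exact Finset.sum_congr rfl fun i _ => mul_comm _ _
    have hall : ∀ x : K, ∑ i, v i * ((x : K) : k) ^ q ^ (i : ℕ) = 0 := by
      intro x
      calc ∑ i, v i * ((x : K) : k) ^ q ^ (i : ℕ)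
          = ∑ i, v i * ∑ j, algebraMap F k (bK.repr x j) * b j ^ q ^ (i : ℕ) :=
            Finset.sum_congr rfl fun i _ => by rw [hexp]
        _ = ∑ j, algebraMap F k (bK.repr x j) * ∑ i, v i * b j ^ q ^ (i : ℕ) := by
            simp_rw [Finset.mul_sum]
            rw [Finset.sum_comm]
            exact Finset.sum_congr rfl fun j _ =>
              Finset.sum_congr rfl fun i _ => mul_left_comm _ _ _
        _ = 0 := by
            refine Finset.sum_eq_zero fun j _ => ?_
            rw [hrow j, mul_zero]
    let chi : Fin m → (Kˣ →* k) := fun i =>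
      { toFun := fun u => ((u : K) : k) ^ q ^ (i : ℕ)
        map_one' := by simp
        map_mul' := by intro a b; push_cast; rw [mul_pow] }
    have hchi_lt : ∀ i i' : Fin m, i < i' → chi i ≠ chi i' := by
      intro i i' hlt heq
      set a := q ^ (i' : ℕ) with ha
      set bb := q ^ (i : ℕ) with hbb
      have hbba : bb < a := Nat.pow_lt_pow_right (by omega) hlt
      have hroots : ∀ x : K, ((x : K) : k) ^ a - ((x : K) : k) ^ bb = 0 := by
        intro x
        rcases eq_or_ne x 0 with rfl | hx
        · have h0 : ((0 : K) : k) = 0 := rfl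
          rw [h0, zero_pow (by positivity), zero_pow (by positivity), sub_zero]
        · have hu := DFunLike.congr_fun heq (Units.mk0 x hx)
          simp only [chi, MonoidHom.coe_mk, OneHom.coe_mk, Units.val_mk0] at hu
          rw [← ha, ← hbb] at hu
          rw [← hu, sub_self]
      have hpoly0 : (X ^ a - X ^ bb : k[X]) ≠ 0 := by
        intro h0
        have hc := congrArg (fun P : k[X] => P.coeff a) h0
        simp only [coeff_sub, coeff_X_pow, coeff_zero] at hc
        rw [if_neg hbba.ne'] at hc
        norm_num at hc
      have hsub : Finset.univ.image (fun x : K => ((x : K) : k)) ⊆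
          (X ^ a - X ^ bb : k[X]).roots.toFinset := by
        intro y hy
        rw [Finset.mem_image] at hy
        obtain ⟨x, -, rfl⟩ := hy
        rw [Multiset.mem_toFinset, mem_roots hpoly0]
        simp only [IsRoot.def, eval_sub, eval_pow, eval_X]
        exact hroots x
      have hcard2 : q ^ m ≤ a := by
        calc q ^ m = Fintype.card K := hcardK.symm
        _ = (Finset.univ.image (fun x : K => ((x : K) : k))).card := by
            rw [Finset.card_image_of_injective _ Subtype.val_injective, Finset.card_univ]
        _ ≤ (X ^ a - X ^ bb : k[X]).roots.toFinset.card := Finset.card_le_card hsub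
        _ ≤ Multiset.card (X ^ a - X ^ bb : k[X]).roots := Multiset.toFinset_card_le _
        _ ≤ (X ^ a - X ^ bb : k[X]).natDegree := card_roots' _
        _ ≤ max a bb := by
            have h := natDegree_sub_le (X ^ a : k[X]) (X ^ bb)
            rwa [natDegree_X_pow, natDegree_X_pow] at h
        _ = a := max_eq_left hbba.le
      have hlt2 : a < q ^ m := Nat.pow_lt_pow_right (by omega) i'.isLt
      omega
    have hchi_inj : Function.Injective chi := by
      intro i i' h
      by_contra hne
      rcases lt_or_gt_of_ne hne with hlt | hlt
      · exact hchi_lt i i' hlt h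
      · exact hchi_lt i' i hlt h.symm
    have hlin : LinearIndependent k (fun i : Fin m => ⇑(chi i)) :=
      (linearIndependent_monoidHom Kˣ k).comp chi hchi_inj
    have hveq : ∀ i, v i = 0 := by
      apply Fintype.linearIndependent_iff.mp hlin v
      funext u
      simp only [Finset.sum_apply, Pi.smul_apply, smul_eq_mul, Pi.zero_apply, chi,
        MonoidHom.coe_mk, OneHom.coe_mk]
      exact hall (u : K)
    exact hv0 (funext hveq)
  -- solve the linear system
  let w : Fin m → k := fun i => if (i : ℕ) = 0 then 1 else 0
  let lam : Fin m → k := N⁻¹.mulVec w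
  have hNv : N.mulVec lam = w := by
    show N.mulVec (N⁻¹.mulVec w) = w
    rw [Matrix.mulVec_mulVec, Matrix.mul_nonsing_inv _ (Ne.isUnit hdet), Matrix.one_mulVec]
  refine ⟨lam, b, hbfix, fun i => ?_⟩
  have h1 : ∑ j, lam j * b j ^ q ^ (i : ℕ) = N.mulVec lam i := by
    simp only [Matrix.mulVec, dotProduct, Matrix.of_apply, N]
    exact Finset.sum_congr rfl fun j _ => mul_comm _ _
  rw [h1, hNv]

set_option maxHeartbeats 1000000 in
/-- The fixed points of a Frobenius morphism on a `k`-algebra `A` form an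
`𝔽_q`-subalgebra `S` of `A`, and `k ⊗_{𝔽_q} S ≃ A` as `k`-algebras via
`λ ⊗ a ↦ λ • a`. -/
theorem fixedPoints_subalgebra_and_baseChange
    (p n q : ℕ) (hp : p.Prime) (hn : 0 < n) (hq : q = p ^ n)
    (F : Type) [Field F] [Fintype F] (hF : Fintype.card F = q)
    (k : Type) [Field k] [Algebra F k] [IsAlgClosure F k]
    (A : Type) [Ring A] [Algebra k A] [Algebra F A] [IsScalarTower F k A]
    (Fr : FrobeniusAlgMor q k A) :
    ∃ S : Subalgebra F A, (∀ a : A, a ∈ S ↔ Fr.toFun a = a) ∧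
      ∃ e : (k ⊗[F] S) ≃ₐ[k] A, ∀ (c : k) (s : S), e (c ⊗ₜ[F] s) = c • (s : A) := by
  classical
  let Fh : A →+ A := AddMonoidHom.mk' Fr.toFun Fr.map_add
  have Fr_zero : Fr.toFun 0 = 0 := map_zero Fh
  have halgk : ∀ c : k, Fr.toFun (algebraMap k A c) = algebraMap k A (c ^ q) := by
    intro c
    rw [Algebra.algebraMap_eq_smul_one, Algebra.algebraMap_eq_smul_one, Fr.map_smulq, Fr.map_one]
  -- the subalgebra of fixed points
  let S : Subalgebra F A :=
    { carrier := {a : A | Fr.toFun a = a}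
      mul_mem' := by
        intro a b ha hb
        simp only [Set.mem_setOf_eq] at *
        rw [Fr.map_mul, ha, hb]
      one_mem' := Fr.map_one
      add_mem' := by
        intro a b ha hb
        simp only [Set.mem_setOf_eq] at *
        rw [Fr.map_add, ha, hb]
      zero_mem' := Fr_zero
      algebraMap_mem' := by
        intro c
        simp only [Set.mem_setOf_eq]
        rw [IsScalarTower.algebraMap_apply F k A, halgk, ← map_pow, ← hF,
          FiniteField.pow_card] }
  have hS : ∀ a : A, a ∈ S ↔ Fr.toFun a = a := fun _ => Iff.rfl
  -- linear independence transfer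
  have hindep : ∀ (ι : Type) (v : ι → A), (∀ i, Fr.toFun (v i) = v i) →
      LinearIndependent F v → LinearIndependent k v := by
    intro ι v hfix hFind
    rw [linearIndependent_iff']
    suffices H : ∀ (Nn : ℕ) (s : Finset ι) (g : ι → k), s.card ≤ Nn →
        (∑ i ∈ s, g i • v i) = 0 → ∀ i ∈ s, g i = 0 by
      intro s g hg i hi; exact H s.card s g le_rfl hg i hi
    intro Nn
    induction Nn with
    | zero =>
      intro s g hs hsum i hi
      have hs0 : s = ∅ := Finset.card_eq_zero.mp (Nat.le_zero.mp hs)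
      rw [hs0] at hi
      simp at hi
    | succ Nn ih =>
      intro s g hs hsum i hi
      by_contra hgi
      set h : ι → k := fun j => (g i)⁻¹ * g j with hh
      have hhi : h i = 1 := inv_mul_cancel₀ hgi
      have hsum2 : ∑ j ∈ s, h j • v j = 0 := by
        calc ∑ j ∈ s, h j • v j = (g i)⁻¹ • ∑ j ∈ s, g j • v j := by
              rw [Finset.smul_sum]
              exact Finset.sum_congr rfl fun j _ => (smul_smul _ _ _).symm
        _ = 0 := by rw [hsum, smul_zero]
      have hsumq : ∑ j ∈ s, (h j ^ q) • v j = 0 := by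
        have h1 := congrArg Fr.toFun hsum2
        rw [show Fr.toFun (∑ j ∈ s, h j • v j) = ∑ j ∈ s, Fr.toFun (h j • v j) from
          map_sum Fh _ s, Fr_zero] at h1
        rw [← h1]
        refine Finset.sum_congr rfl fun j hj => ?_
        rw [Fr.map_smulq, hfix j]
      have hsub : ∑ j ∈ s.erase i, (h j ^ q - h j) • v j = 0 := by
        have h3 : ∑ j ∈ s, (h j ^ q - h j) • v j = 0 := by
          simp_rw [sub_smul]
          rw [Finset.sum_sub_distrib, hsumq, hsum2, sub_zero]
        rw [← h3]
        apply Finset.sum_erase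
        rw [hhi, one_pow, sub_self, zero_smul]
      have hih := ih (s.erase i) (fun j => h j ^ q - h j)
        (by have := Finset.card_erase_of_mem hi; omega) hsub
      have hfixall : ∀ j ∈ s, h j ^ q = h j := by
        intro j hj
        rcases eq_or_ne j i with rfl | hji
        · rw [hhi, one_pow]
        · have := hih j (Finset.mem_erase.mpr ⟨hji, hj⟩)
          have := sub_eq_zero.mp this
          exact this
      have hex : ∀ j : ι, ∃ c : F, j ∈ s → algebraMap F k c = h j := by
        intro j
        by_cases hj : j ∈ s
        · obtain ⟨c, hc⟩ := pow_q_fixed p n q hp hn hq F hF k (h j) (hfixall j hj)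
          exact ⟨c, fun _ => hc⟩
        · exact ⟨0, fun h' => absurd h' hj⟩
      choose c hc using hex
      have hsumF : ∑ j ∈ s, c j • v j = 0 := by
        rw [← hsum2]
        refine Finset.sum_congr rfl fun j hj => ?_
        rw [← hc j hj, algebraMap_smul]
      have hc0 := linearIndependent_iff'.mp hFind s c hsumF i hi
      have : (0 : k) = 1 := by
        rw [← hhi, ← hc i hi, hc0, map_zero]
      exact zero_ne_one this
  -- fixed points span A over k
  have hspan : ∀ a : A, a ∈ Submodule.span k {x : A | Fr.toFun x = x} := by
    intro a
    obtain ⟨m, hm1, hma⟩ := Fr.locally_finite a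
    obtain ⟨lam, b, hbfix, hsol⟩ := exists_moore p n q hp hn hq F hF k m hm1
    set w : Fin m → A := fun j => ∑ i ∈ Finset.range m, b j ^ q ^ i • Fr.toFun^[i] a with hw
    have hstep : ∀ (j : Fin m) (i : ℕ),
        Fr.toFun (b j ^ q ^ i • Fr.toFun^[i] a) = b j ^ q ^ (i + 1) • Fr.toFun^[i + 1] a := by
      intro j i
      rw [Fr.map_smulq, ← pow_mul, ← pow_succ, Function.iterate_succ_apply']
    have hwfix : ∀ j, Fr.toFun (w j) = w j := by
      intro j
      rw [hw]
      calc Fr.toFun (∑ i ∈ Finset.range m, b j ^ q ^ i • Fr.toFun^[i] a)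
          = ∑ i ∈ Finset.range m, Fr.toFun (b j ^ q ^ i • Fr.toFun^[i] a) := map_sum Fh _ _
        _ = ∑ i ∈ Finset.range m, b j ^ q ^ (i + 1) • Fr.toFun^[i + 1] a :=
            Finset.sum_congr rfl fun i _ => hstep j i
        _ = ∑ i ∈ Finset.range m, b j ^ q ^ i • Fr.toFun^[i] a := by
            have e1 := Finset.sum_range_succ (fun i => b j ^ q ^ i • Fr.toFun^[i] a) m
            have e2 := Finset.sum_range_succ' (fun i => b j ^ q ^ i • Fr.toFun^[i] a) m
            have hfm : b j ^ q ^ m • Fr.toFun^[m] a = b j ^ q ^ 0 • Fr.toFun^[0] a := by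
              rw [hbfix j, hma, pow_zero, pow_one, Function.iterate_zero_apply]
            have h4 := e1.symm.trans e2
            rw [hfm] at h4
            exact (add_right_cancel h4).symm
    have hcomb : ∑ j, lam j • w j = a := by
      calc ∑ j, lam j • w j
          = ∑ j, ∑ i ∈ Finset.range m, (lam j * b j ^ q ^ i) • Fr.toFun^[i] a := by
            refine Finset.sum_congr rfl fun j _ => ?_
            rw [hw, Finset.smul_sum]
            exact Finset.sum_congr rfl fun i _ => smul_smul _ _ _
        _ = ∑ i ∈ Finset.range m, (∑ j, lam j * b j ^ q ^ i) • Fr.toFun^[i] a := by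
            rw [Finset.sum_comm]
            exact Finset.sum_congr rfl fun i _ => (Finset.sum_smul).symm
        _ = a := by
            have hterm : ∀ i ∈ Finset.range m,
                (∑ j, lam j * b j ^ q ^ i) • Fr.toFun^[i] a
                  = if i = 0 then a else 0 := by
              intro i hi
              rw [Finset.mem_range] at hi
              have hs := hsol ⟨i, hi⟩
              rw [show ((⟨i, hi⟩ : Fin m) : ℕ) = i from rfl] at hs
              rw [hs]
              by_cases h0 : i = 0
              · subst h0; simp
              · simp [h0]
            rw [Finset.sum_congr rfl hterm, Finset.sum_ite_eq' (Finset.range m) 0 fun _ => a]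
            simp [Finset.mem_range, hm1]
            omega
    rw [← hcomb]
    exact Submodule.sum_mem _ fun j _ =>
      Submodule.smul_mem _ _ (Submodule.subset_span (hwfix j))
  -- the algebra morphism
  let φ : k ⊗[F] S →ₐ[k] A := Algebra.TensorProduct.lift (Algebra.ofId k A) S.val
    (fun x y => (Algebra.commutes x (S.val y)))
  have hφ_tmul : ∀ (c : k) (s : S), φ (c ⊗ₜ[F] s) = c • (s : A) := by
    intro c s
    rw [show φ (c ⊗ₜ[F] s) = (Algebra.ofId k A) c * S.val s from Algebra.TensorProduct.lift_tmul _ _ _ _ _]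
    rw [show (Algebra.ofId k A) c = algebraMap k A c from rfl, ← Algebra.smul_def]
    rfl
  -- bases
  let bS := Module.Basis.ofVectorSpace F S
  let v : Module.Basis.ofVectorSpaceIndex F S → A := fun i => (bS i : A)
  have hvfix : ∀ i, Fr.toFun (v i) = v i := fun i => (bS i).2
  have hvindF : LinearIndependent F v :=
    bS.linearIndependent.map' S.toSubmodule.subtype (Submodule.ker_subtype _)
  have hvind : LinearIndependent k v := hindep _ v hvfix hvindF
  have hsub2 : {x : A | Fr.toFun x = x} ⊆ (Submodule.span k (Set.range v) : Set A) := by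
    intro x hx
    have h2 : x ∈ Submodule.span F (Set.range v) := by
      have key : ∀ y : S, (y : A) ∈ Submodule.span F (Set.range v) := by
        intro y
        have h1 : y ∈ Submodule.span F (Set.range ⇑bS) := Module.Basis.mem_span bS y
        induction h1 using Submodule.span_induction with
        | mem z hz => obtain ⟨i, rfl⟩ := hz; exact Submodule.subset_span ⟨i, rfl⟩
        | zero => simp
        | add y z _ _ hy hz =>
            push_cast
            exact Submodule.add_mem _ hy hz
        | smul cc y _ hy =>
            rw [SetLike.val_smul]
            exact Submodule.smul_mem _ _ hy
      exact key ⟨x, hx⟩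
    exact Submodule.span_le_restrictScalars F k _ h2
  have hvspan : ⊤ ≤ Submodule.span k (Set.range v) := by
    intro a _
    exact Submodule.span_le.mpr hsub2 (hspan a)
  let bA : Module.Basis _ k A := Module.Basis.mk hvind hvspan
  let bT : Module.Basis _ k (k ⊗[F] S) := bS.baseChange k
  have hφ_basis : ∀ i, φ (bT i) = bA i := by
    intro i
    rw [show bT i = (1 : k) ⊗ₜ[F] bS i from Module.Basis.baseChange_apply k bS i]
    rw [hφ_tmul, one_smul, Module.Basis.mk_apply]
  have hlin_eq : φ.toLinearMap = (bT.equiv bA (Equiv.refl _)).toLinearMap := by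
    apply bT.ext
    intro i
    rw [AlgHom.toLinearMap_apply, LinearEquiv.coe_coe, Module.Basis.equiv_apply, Equiv.refl_apply,
      hφ_basis i]
  have hbij : Function.Bijective φ := by
    have hcoe : ⇑φ = ⇑(bT.equiv bA (Equiv.refl _)) :=
      funext fun x => DFunLike.congr_fun hlin_eq x
    rw [hcoe]
    exact (bT.equiv bA (Equiv.refl _)).bijective
  exact ⟨S, hS, AlgEquiv.ofBijective φ hbij, fun c s => hφ_tmul c s⟩

end FrobeniusFixedAlg
end

section
/- Let A be a k-algebra with a Frobenius morphism F_A and let M be an F_A-stable finitely generated right A-module with Frobenius morphism F_M. Then M^{F_M} is a module over the 𝔽_q-algebra A^{F_A}, and the natural map k ⊗_{𝔽_q} M^{F_M} → M, λ ⊗ m ↦ λm, is an isomorphism of right A-modules (where k ⊗_{𝔽_q} M^{F_M} is an A-module via the isomorphism k ⊗_{𝔽_q} A^{F_A} ≅ A). -/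
/-!
If `A` is a `k`-algebra with Frobenius morphism `F_A` and `M` is an `F_A`-stable
finitely generated right `A`-module with Frobenius morphism `F_M`, then the fixed
points `M^{F_M}` form a module over `A^{F_A}` (an `𝔽_q`-subspace stable under the
fixed scalars) and the natural map `k ⊗_{𝔽_q} M^{F_M} → M`, `λ ⊗ m ↦ λ • m`, is an
isomorphism of right `A`-modules.  Right `A`-modules are encoded as left
`Aᵐᵒᵖ`-modules.
-/

open scoped TensorProduct

namespace FrobeniusFixedMod

open Polynomial in
private lemma roots_pow_aux (k : Type) [Field k] [IsAlgClosed k] (p : ℕ) (hp : p.Prime)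
    [CharP k p] (N : ℕ) (hN : 2 ≤ N) (hpN : p ∣ N) :
    ∃ S : Finset k, S.card = N ∧ ∀ x : k, x ∈ S ↔ x ^ N = x := by
  classical
  set P : k[X] := X ^ N - X with hP
  have hdeg : P.natDegree = N := by
    rw [hP, natDegree_sub_eq_left_of_natDegree_lt] <;>
      simp only [natDegree_X_pow, natDegree_X] <;> omega
  have hP0 : P ≠ 0 := by
    intro h0
    rw [h0, natDegree_zero] at hdeg; omega
  have hder : P.derivative = -1 := by
    rw [hP]
    simp only [derivative_sub, derivative_X_pow, derivative_X]
    rw [(CharP.cast_eq_zero_iff k p N).mpr hpN]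
    simp
  have hsep : P.Separable := by
    rw [Polynomial.Separable, hder]
    exact ⟨0, -1, by ring⟩
  have hcard : Multiset.card P.roots = N := by
    rw [splits_iff_card_roots.mp (IsAlgClosed.splits P), hdeg]
  refine ⟨P.roots.toFinset, ?_, ?_⟩
  · rw [Multiset.toFinset_card_of_nodup (nodup_roots hsep), hcard]
  · intro x
    rw [Multiset.mem_toFinset, Polynomial.mem_roots']
    constructor
    · rintro ⟨-, hroot⟩
      have : x ^ N - x = 0 := by simpa [hP, Polynomial.IsRoot] using hroot
      exact sub_eq_zero.mp this
    · intro hx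
      exact ⟨hP0, by simp [hP, Polynomial.IsRoot, hx, sub_eq_zero]⟩

/-- A Frobenius map on a `k`-vector space `V` (relative to `q`). -/
structure FrobeniusMap (q : ℕ) (k : Type*) (V : Type*) [Field k]
    [AddCommGroup V] [Module k V] where
  toFun : V → V
  bijective : Function.Bijective toFun
  map_add : ∀ v w : V, toFun (v + w) = toFun v + toFun w
  map_smulq : ∀ (c : k) (v : V), toFun (c • v) = c ^ q • toFun v
  locally_finite : ∀ v : V, ∃ m : ℕ, 1 ≤ m ∧ toFun^[m] v = v

/-- A Frobenius morphism on a `k`-algebra `A`. -/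
structure FrobeniusAlgMor (q : ℕ) (k : Type*) (A : Type*) [Field k] [Ring A]
    [Algebra k A] extends FrobeniusMap q k A where
  map_one : toFun 1 = 1
  map_mul : ∀ a b : A, toFun (a * b) = toFun a * toFun b

/-- The fixed points of a compatible Frobenius morphism on an `F_A`-stable right
`A`-module `M` form a module over the fixed subalgebra, and base change to `k`
recovers `M` as a right `A`-module. -/
theorem fixedPoints_module_and_baseChange
    (p n q : ℕ) (hp : p.Prime) (hn : 0 < n) (hq : q = p ^ n)
    (F : Type) [Field F] [Fintype F] (hF : Fintype.card F = q)
    (k : Type) [Field k] [Algebra F k] [IsAlgClosure F k]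
    (A : Type) [Ring A] [Algebra k A]
    (FA : FrobeniusAlgMor q k A)
    (M : Type) [AddCommGroup M] [Module Aᵐᵒᵖ M] [Module.Finite Aᵐᵒᵖ M]
    [Module k M] [IsScalarTower k Aᵐᵒᵖ M]
    [Module F M] [IsScalarTower F k M]
    (FM : FrobeniusMap q k M)
    -- compatibility `F_M (m · a) = F_M m · F_A a` with the right `A`-action
    (hFM : ∀ (m : M) (a : A),
      FM.toFun (MulOpposite.op a • m) = MulOpposite.op (FA.toFun a) • FM.toFun m) :
    ∃ (W : Submodule F M) (_ : ∀ m : M, m ∈ W ↔ FM.toFun m = m)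
      (hstab : ∀ (a : A), FA.toFun a = a → ∀ m ∈ W, MulOpposite.op a • m ∈ W),
      ∃ e : (k ⊗[F] W) ≃ₗ[k] M,
        (∀ (c : k) (w : W), e (c ⊗ₜ[F] w) = c • (w : M)) ∧
        (∀ (c : k) (w : W) (a : A) (ha : FA.toFun a = a),
          e (c ⊗ₜ[F] (⟨MulOpposite.op a • (w : M), hstab a ha _ w.2⟩ : W)) =
            MulOpposite.op a • e (c ⊗ₜ[F] w)) := by
  classical
  have hq2 : 2 ≤ q := by
    subst hq
    calc 2 ≤ p := hp.two_le
    _ ≤ p ^ n := Nat.le_self_pow (by omega) p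
  haveI hcF : CharP F p := by
    obtain ⟨p', hc⟩ := CharP.exists F
    haveI := hc
    obtain ⟨n', hp', hcard'⟩ := FiniteField.card F p'
    have hdvd : p ∣ p' ^ (n' : ℕ) := by
      rw [← hcard', hF, hq]; exact dvd_pow_self p (by omega)
    have hpe : p = p' := (Nat.prime_dvd_prime_iff_eq hp hp').mp (hp.dvd_of_dvd_pow hdvd)
    rwa [hpe]
  haveI hck : CharP k p := charP_of_injective_algebraMap (algebraMap F k).injective p
  haveI : IsAlgClosed k := IsAlgClosure.isAlgClosed F
  have hpq : p ∣ q := hq ▸ dvd_pow_self p (by omega)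
  -- fixed scalars are exactly the image of F
  have hfixk : ∀ c : k, c ^ q = c ↔ c ∈ Set.range (algebraMap F k) := by
    obtain ⟨S, hScard, hSmem⟩ := roots_pow_aux k p hp q (by omega) hpq
    have himage : (Finset.univ.image (algebraMap F k)) = S := by
      apply Finset.eq_of_subset_of_card_le
      · intro x hx
        simp only [Finset.mem_image] at hx
        obtain ⟨c, -, rfl⟩ := hx
        rw [hSmem, ← map_pow, ← hF, FiniteField.pow_card]
      · rw [hScard, Finset.card_image_of_injective _ (algebraMap F k).injective,
          Finset.card_univ, hF]
    intro c
    constructor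
    · intro hc
      have hcS : c ∈ S := (hSmem c).mpr hc
      rw [← himage] at hcS
      simp only [Finset.mem_image] at hcS
      obtain ⟨d, -, rfl⟩ := hcS
      exact ⟨d, rfl⟩
    · rintro ⟨d, rfl⟩
      rw [← map_pow, ← hF, FiniteField.pow_card]
  -- basic facts about FM
  have hW0 : FM.toFun 0 = 0 := by
    have h := FM.map_add 0 0
    rw [add_zero] at h
    exact (left_eq_add.mp h)
  let FMh : M →+ M := AddMonoidHom.mk' FM.toFun FM.map_add
  have hFsmul : ∀ (c : F) (m : M), FM.toFun (c • m) = c • FM.toFun m := by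
    intro c m
    have hcq : c ^ q = c := by rw [← hF]; exact FiniteField.pow_card c
    rw [← algebraMap_smul k c m, FM.map_smulq, ← map_pow, hcq, algebraMap_smul]
  -- the fixed-point submodule
  let Wset : Set M := {m | FM.toFun m = m}
  let W : Submodule F M :=
    { carrier := Wset
      add_mem' := fun {a b} ha hb => by
        simp only [Wset, Set.mem_setOf_eq] at *
        rw [FM.map_add, ha, hb]
      zero_mem' := hW0
      smul_mem' := fun c m hm => by
        simp only [Wset, Set.mem_setOf_eq] at *
        rw [hFsmul, hm]
      }
  have hWmem : ∀ m : M, m ∈ W ↔ FM.toFun m = m := fun m => Iff.rfl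
  have hstab : ∀ (a : A), FA.toFun a = a → ∀ m ∈ W, MulOpposite.op a • m ∈ W := by
    intro a ha m hm
    show FM.toFun _ = _
    rw [hFM, ha, (hWmem m).mp hm]
  -- linear independence over k of an F-basis of W
  let b := Module.Basis.ofVectorSpace F W
  let v : Module.Basis.ofVectorSpaceIndex F W → M := fun i => ((b i : W) : M)
  have hvfix : ∀ i, FM.toFun (v i) = v i := fun i => (hWmem _).mp (b i).2
  have hstep : ∀ (N : ℕ) (s : Finset (Module.Basis.ofVectorSpaceIndex F W)) (g : _ → k),
      s.card ≤ N → (∑ i ∈ s, g i • v i) = 0 → ∀ i ∈ s, g i = 0 := by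
    intro N
    induction N with
    | zero =>
      intro s g hcard hsum i hi
      rw [Nat.le_zero, Finset.card_eq_zero] at hcard
      subst hcard
      exact absurd hi (Finset.notMem_empty i)
    | succ N ih =>
      intro s g hcard hsum i hi
      by_contra hgi
      set g' : _ → k := fun j => (g i)⁻¹ * g j with hg'def
      have hsum' : (∑ j ∈ s, g' j • v j) = 0 := by
        have : (∑ j ∈ s, g' j • v j) = (g i)⁻¹ • ∑ j ∈ s, g j • v j := by
          rw [Finset.smul_sum]
          exact Finset.sum_congr rfl fun j _ => by rw [hg'def, mul_smul]
        rw [this, hsum, smul_zero]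
      have hg'i : g' i = 1 := inv_mul_cancel₀ hgi
      have happ : (∑ j ∈ s, (g' j ^ q) • v j) = 0 := by
        have h1 : FM.toFun (∑ j ∈ s, g' j • v j) = ∑ j ∈ s, (g' j ^ q) • v j := by
          have h2 : FMh (∑ j ∈ s, g' j • v j) = ∑ j ∈ s, FMh (g' j • v j) :=
            map_sum FMh _ s
          have h3 : ∀ j, FMh (g' j • v j) = (g' j ^ q) • v j := fun j => by
            show FM.toFun _ = _
            rw [FM.map_smulq, hvfix]
          calc FM.toFun (∑ j ∈ s, g' j • v j) = ∑ j ∈ s, FMh (g' j • v j) := h2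
            _ = ∑ j ∈ s, (g' j ^ q) • v j := Finset.sum_congr rfl fun j _ => h3 j
        rw [← h1, hsum', hW0]
      have hsub : (∑ j ∈ s, (g' j ^ q - g' j) • v j) = 0 := by
        simp only [sub_smul]
        rw [Finset.sum_sub_distrib, happ, hsum', sub_zero]
      have hsum'' : (∑ j ∈ s.erase i, (g' j ^ q - g' j) • v j) = 0 := by
        rw [Finset.sum_erase]
        · exact hsub
        · rw [hg'i, one_pow, sub_self, zero_smul]
      have hcard' : (s.erase i).card ≤ N := by
        have := Finset.card_erase_of_mem hi
        omega
      have hall : ∀ j ∈ s, g' j ^ q = g' j := by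
        intro j hj
        rcases eq_or_ne j i with rfl | hji
        · rw [hg'i, one_pow]
        · have h0 := ih (s.erase i) _ hcard' hsum'' j (Finset.mem_erase.mpr ⟨hji, hj⟩)
          exact sub_eq_zero.mp h0
      set h : _ → F := fun j =>
        if hj : ∃ d : F, algebraMap F k d = g' j then hj.choose else 0 with hhdef
      have hh : ∀ j ∈ s, algebraMap F k (h j) = g' j := by
        intro j hj
        have hex : ∃ d : F, algebraMap F k d = g' j := by
          obtain ⟨d, hd⟩ := (hfixk (g' j)).mp (hall j hj)
          exact ⟨d, hd⟩
        rw [hhdef]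
        simp only [dif_pos hex]
        exact hex.choose_spec
      have hsumW : (∑ j ∈ s, h j • b j) = (0 : W) := by
        apply Subtype.ext
        rw [Submodule.coe_sum, ZeroMemClass.coe_zero]
        calc (∑ j ∈ s, (((h j • b j : W)) : M)) = ∑ j ∈ s, g' j • v j := by
              refine Finset.sum_congr rfl fun j hj => ?_
              rw [Submodule.coe_smul]
              rw [← algebraMap_smul k (h j) ((b j : W) : M), hh j hj]
          _ = 0 := hsum'
      have hzero : ∀ j ∈ s, h j = 0 :=
        linearIndependent_iff'.mp b.linearIndependent s h hsumW
      have : g' i = 0 := by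
        rw [← hh i hi, hzero i hi, map_zero]
      rw [hg'i] at this
      exact one_ne_zero this
  have hli : LinearIndependent k v :=
    linearIndependent_iff'.mpr fun s g hg i hi => hstep s.card s g le_rfl hg i hi
  -- the base-change map
  let φ : (k ⊗[F] W) →ₗ[k] M := (W.subtype).liftBaseChange k
  have hφtmul : ∀ (c : k) (w : W), φ (c ⊗ₜ[F] w) = c • (w : M) := fun c w =>
    LinearMap.liftBaseChange_tmul _ _ _ _
  let B := Algebra.TensorProduct.basis k b
  have hφB : ∀ i, φ (B i) = v i := by
    intro i
    rw [Algebra.TensorProduct.basis_apply]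
    rw [hφtmul, one_smul]
  have hinj : Function.Injective φ := by
    rw [← LinearMap.ker_eq_bot]
    apply LinearMap.ker_eq_bot'.mpr
    intro x hx
    have hrepr := B.linearCombination_repr x
    have h1 : φ (Finsupp.linearCombination k B (B.repr x)) =
        Finsupp.linearCombination k (φ ∘ B) (B.repr x) :=
      Finsupp.apply_linearCombination k φ B (B.repr x)
    have h2 : Finsupp.linearCombination k (φ ∘ B) (B.repr x) = 0 := by
      rw [← h1, hrepr, hx]
    have h3 : (φ ∘ B) = v := funext hφB
    rw [h3] at h2
    have h4 : B.repr x = 0 := linearIndependent_iff.mp hli _ h2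
    rw [h4, map_zero] at hrepr
    exact hrepr.symm
  -- spanning
  have hspanW : ∀ v0 : M, v0 ∈ Submodule.span k (W : Set M) := by
    intro v0
    obtain ⟨m, hm1, hmv⟩ := FM.locally_finite v0
    haveI : NeZero m := ⟨by omega⟩
    have hqm2 : 2 ≤ q ^ m := le_trans hq2 (Nat.le_self_pow (by omega) q)
    have hpqm : p ∣ q ^ m := dvd_trans hpq (dvd_pow_self q (by omega))
    obtain ⟨S, hScard, hSmem⟩ := roots_pow_aux k p hp (q ^ m) hqm2 hpqm
    let E : Submonoid k :=
      { carrier := {x : k | x ^ q ^ m = x}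
        mul_mem' := fun {a b} ha hb => by
          simp only [Set.mem_setOf_eq] at *
          rw [mul_pow, ha, hb]
        one_mem' := one_pow _ }
    haveI : Fintype E := Fintype.ofFinset S fun x => (hSmem x)
    let ψ : Fin m → (E →* k) := fun i =>
      { toFun := fun c => (c : k) ^ q ^ (i : ℕ)
        map_one' := by simp
        map_mul' := fun a b => by push_cast; rw [mul_pow] }
    have hψdist : ∀ i j : Fin m, (i : ℕ) < (j : ℕ) → ψ i ≠ ψ j := by
      intro i j hij heq
      set d := q ^ (j : ℕ) - q ^ (i : ℕ) with hd
      have hqij : q ^ (i : ℕ) < q ^ (j : ℕ) := Nat.pow_lt_pow_right (by omega) hij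
      have hd1 : 1 ≤ d := by omega
      have hT0 : ((Polynomial.X : Polynomial k) ^ d - 1) ≠ 0 := by
        rw [← Polynomial.C_1]
        exact Polynomial.X_pow_sub_C_ne_zero (by omega) 1
      have hTdeg : ((Polynomial.X : Polynomial k) ^ d - 1).natDegree = d := by
        rw [← Polynomial.C_1]; exact Polynomial.natDegree_X_pow_sub_C
      have hTcard : ((Polynomial.X : Polynomial k) ^ d - 1).roots.toFinset.card ≤ d :=
        le_trans (Multiset.toFinset_card_le _)
          (le_trans (Polynomial.card_roots' _) (le_of_eq hTdeg))
      have hsub : S.erase 0 ⊆ ((Polynomial.X : Polynomial k) ^ d - 1).roots.toFinset := by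
        intro x hx
        obtain ⟨hx0, hxS⟩ := Finset.mem_erase.mp hx
        have hxE : x ^ q ^ m = x := (hSmem x).mp hxS
        have h2 : x ^ q ^ (i : ℕ) = x ^ q ^ (j : ℕ) :=
          congrArg (fun φ' : E →* k => φ' ⟨x, hxE⟩) heq
        have h3 : x ^ q ^ (i : ℕ) * x ^ d = x ^ q ^ (j : ℕ) := by
          rw [← pow_add]; congr 1; omega
        have h4 : x ^ q ^ (i : ℕ) ≠ 0 := pow_ne_zero _ hx0
        have hxd : x ^ d = 1 := by
          apply mul_left_cancel₀ h4
          rw [h3, mul_one, h2]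
        rw [Multiset.mem_toFinset, Polynomial.mem_roots']
        exact ⟨hT0, by simp [Polynomial.IsRoot, hxd]⟩
      have h0S : (0 : k) ∈ S := (hSmem 0).mpr (by rw [zero_pow (by omega)])
      have hcard2 := Finset.card_le_card hsub
      rw [Finset.card_erase_of_mem h0S, hScard] at hcard2
      have hj1 : (j : ℕ) ≤ m - 1 := by have := j.isLt; omega
      have hjle : q ^ (j : ℕ) ≤ q ^ (m - 1) := Nat.pow_le_pow_right (by omega) hj1
      have hi1 : 1 ≤ q ^ (i : ℕ) := Nat.one_le_pow _ _ (by omega)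
      have hmm : q ^ (m - 1) < q ^ m := Nat.pow_lt_pow_right (by omega) (by omega)
      omega
    have hψinj : Function.Injective ψ := by
      intro i j hij
      by_contra hne
      rcases lt_trichotomy (i : ℕ) (j : ℕ) with h | h | h
      · exact hψdist i j h hij
      · exact hne (Fin.ext h)
      · exact hψdist j i h hij.symm
    have hli2 : LinearIndependent k (fun i => ⇑(ψ i)) :=
      (linearIndependent_monoidHom E k).comp ψ hψinj
    let col : E → (Fin m → k) := fun c i => (c : k) ^ q ^ (i : ℕ)
    have hcolspan : Submodule.span k (Set.range col) = ⊤ := by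
      by_contra hne
      have hlt : Submodule.span k (Set.range col) < ⊤ := lt_top_iff_ne_top.mpr hne
      haveI := Submodule.Quotient.nontrivial_iff.mpr hlt.ne
      let Bq := Module.Basis.ofVectorSpace k ((Fin m → k) ⧸ Submodule.span k (Set.range col))
      obtain ⟨i0⟩ := Bq.index_nonempty
      let f : (Fin m → k) →ₗ[k] k :=
        (Bq.coord i0).comp (Submodule.span k (Set.range col)).mkQ
      have hfvan : ∀ c : E, f (col c) = 0 := by
        intro c
        have hmem : col c ∈ Submodule.span k (Set.range col) :=
          Submodule.subset_span ⟨c, rfl⟩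
        have hz : (Submodule.span k (Set.range col)).mkQ (col c) = 0 := by
          rwa [Submodule.mkQ_apply, Submodule.Quotient.mk_eq_zero]
        simp only [f, LinearMap.comp_apply, hz, map_zero]
      have hfne : f ≠ 0 := by
        intro h0
        obtain ⟨y, hy⟩ := (Submodule.span k (Set.range col)).mkQ_surjective (Bq i0)
        have h1 : f y = 1 := by
          simp only [f, LinearMap.comp_apply]
          rw [hy, Module.Basis.coord_apply, Module.Basis.repr_self, Finsupp.single_eq_same]
        rw [h0] at h1
        simp at h1
      set x : Fin m → k := fun i => f (fun j => if i = j then 1 else 0) with hxdef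
      have hfx : ∀ y : Fin m → k, f y = ∑ i, y i * x i := by
        intro y
        rw [LinearMap.pi_apply_eq_sum_univ f y]
        exact Finset.sum_congr rfl fun i _ => by rw [smul_eq_mul]
      have hrel : (∑ i, x i • ⇑(ψ i)) = 0 := by
        funext c
        simp only [Finset.sum_apply, Pi.smul_apply, smul_eq_mul, Pi.zero_apply]
        have h5 := hfvan c
        rw [hfx (col c)] at h5
        rw [← h5]
        exact Finset.sum_congr rfl fun i _ => mul_comm _ _
      have hxz : ∀ i, x i = 0 := Fintype.linearIndependent_iff.mp hli2 x hrel
      apply hfne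
      apply LinearMap.ext
      intro y
      rw [hfx y]
      simp [hxz]
    have he0 : (Pi.single (0 : Fin m) (1 : k)) ∈ Submodule.span k (Set.range col) := by
      rw [hcolspan]; trivial
    obtain ⟨lam, hlam⟩ := (Submodule.mem_span_range_iff_exists_fun k).mp he0
    let u : E → M := fun c => ∑ i : Fin m, col c i • FM.toFun^[(i : ℕ)] v0
    have hufix : ∀ c : E, FM.toFun (u c) = u c := by
      intro c
      have hc : (c : k) ^ q ^ m = (c : k) := c.2
      set g : ℕ → M := fun i => (c : k) ^ q ^ i • FM.toFun^[i] v0 with hgdef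
      have hu2 : u c = ∑ i ∈ Finset.range m, g i := Fin.sum_univ_eq_sum_range g m
      have hFMsum : FM.toFun (∑ i ∈ Finset.range m, g i) = ∑ i ∈ Finset.range m, g (i + 1) := by
        have h2 : FMh (∑ i ∈ Finset.range m, g i) = ∑ i ∈ Finset.range m, FMh (g i) :=
          map_sum FMh _ _
        have h3 : ∀ i, FMh (g i) = g (i + 1) := by
          intro i
          show FM.toFun _ = _
          rw [hgdef]
          simp only
          rw [FM.map_smulq, ← pow_mul, ← pow_succ, Function.iterate_succ_apply']
        calc FM.toFun (∑ i ∈ Finset.range m, g i)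
            = ∑ i ∈ Finset.range m, FMh (g i) := h2
          _ = ∑ i ∈ Finset.range m, g (i + 1) := Finset.sum_congr rfl fun i _ => h3 i
      have hg0m : g m = g 0 := by
        rw [hgdef]
        simp only
        rw [hmv, hc, pow_zero, pow_one, Function.iterate_zero_apply]
      have hshift : ∑ i ∈ Finset.range m, g (i + 1) = ∑ i ∈ Finset.range m, g i := by
        have hs' := Finset.sum_range_succ' g m
        have hs := Finset.sum_range_succ g m
        rw [hs] at hs'
        rw [hg0m] at hs'
        exact add_right_cancel hs'.symm
      rw [hu2, hFMsum, hshift]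
    have h7 : ∑ i : Fin m, ((Pi.single (0 : Fin m) (1 : k) : Fin m → k) i) • FM.toFun^[(i : ℕ)] v0 = v0 := by
      rw [Finset.sum_eq_single (0 : Fin m)]
      · simp
      · intro i _ hi
        rw [Pi.single_eq_of_ne hi, zero_smul]
      · intro h
        exact absurd (Finset.mem_univ _) h
    have hv0 : v0 = ∑ c : E, lam c • u c := by
      have h6 : ∀ i : Fin m, (∑ c : E, lam c * col c i) = (Pi.single (0 : Fin m) (1 : k) : Fin m → k) i := by
        intro i
        have h8 := congrFun hlam i
        simpa [Finset.sum_apply, Pi.smul_apply, smul_eq_mul] using h8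
      calc v0 = ∑ i : Fin m, ((Pi.single (0 : Fin m) (1 : k) : Fin m → k) i) • FM.toFun^[(i : ℕ)] v0 := h7.symm
        _ = ∑ i : Fin m, (∑ c : E, lam c * col c i) • FM.toFun^[(i : ℕ)] v0 :=
            Finset.sum_congr rfl fun i _ => by rw [h6 i]
        _ = ∑ i : Fin m, ∑ c : E, (lam c * col c i) • FM.toFun^[(i : ℕ)] v0 :=
            Finset.sum_congr rfl fun i _ => Finset.sum_smul
        _ = ∑ c : E, ∑ i : Fin m, (lam c * col c i) • FM.toFun^[(i : ℕ)] v0 := Finset.sum_comm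
        _ = ∑ c : E, lam c • u c := by
            refine Finset.sum_congr rfl fun c _ => ?_
            rw [Finset.smul_sum]
            exact Finset.sum_congr rfl fun i _ => by rw [mul_smul]
    rw [hv0]
    exact Submodule.sum_mem _ fun c _ =>
      Submodule.smul_mem _ _ (Submodule.subset_span (show u c ∈ (W : Set M) from hufix c))
  have hsur : Function.Surjective φ := by
    intro m
    have hrange : LinearMap.range φ = Submodule.span k (W : Set M) := by
      rw [LinearMap.range_liftBaseChange, Submodule.range_subtype]
    have hm : m ∈ LinearMap.range φ := by rw [hrange]; exact hspanW m
    obtain ⟨x, hx⟩ := hm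
    exact ⟨x, hx⟩
  let e := LinearEquiv.ofBijective φ ⟨hinj, hsur⟩
  have he : ∀ x, e x = φ x := fun x => rfl
  refine ⟨W, hWmem, hstab, e, fun c w => by rw [he, hφtmul], ?_⟩
  intro c w a ha
  rw [he, he, hφtmul, hφtmul]
  exact smul_comm _ _ _

end FrobeniusFixedMod
end
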